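/- Let (X, δ) be a diversity. For x ∈ X define κ_x : P_fin(X) → ℝ by κ_x(A) = δ(A ∪ {x}). Then each κ_x is an admissible function on X, and the map x ↦ κ_x embeds (X, δ) into (E(X), δ̂): for every finite subset {x₁, …, x_n} ⊆ X, δ̂({κ_{x₁}, …, κ_{x_n}}) = δ({x₁, …, x_n}). -/

import Mathlib

open scoped Classical

/-- A diversity on `X`: a real-valued function on finite subsets satisfying
(D1) nonnegativity with `δ A = 0 ↔ |A| ≤ 1`, and (D2) the triangle inequality. -/
structure Diversity (X : Type*) where
  δ : Finset X → ℝ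
  nonneg : ∀ A : Finset X, 0 ≤ δ A
  eq_zero_iff : ∀ A : Finset X, δ A = 0 ↔ A.card ≤ 1
  triangle : ∀ A B C : Finset X, B.Nonempty → δ (A ∪ C) ≤ δ (A ∪ B) + δ (B ∪ C)

/-- An admissible function on a diversity (a one-point extension). -/
structure IsAdmissible {X : Type*} (D : Diversity X) (f : Finset X → ℝ) : Prop where
  empty : f ∅ = 0
  le : ∀ A : Finset X, D.δ A ≤ f A
  tri : ∀ A B C : Finset X, C.Nonempty → f (A ∪ B) ≤ f (A ∪ C) + D.δ (B ∪ C)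
  subadd : ∀ A B : Finset X, f (A ∪ B) ≤ f A + f B

/-- Restriction of a diversity to a subset. -/
noncomputable def Diversity.restrict {X : Type*} (D : Diversity X) (S : Set X) : Diversity S where
  δ A := D.δ (A.image Subtype.val)
  nonneg A := D.nonneg _
  eq_zero_iff A := by
    rw [D.eq_zero_iff, Finset.card_image_of_injective _ Subtype.val_injective]
  triangle A B C hB := by
    have h := D.triangle (A.image Subtype.val) (B.image Subtype.val) (C.image Subtype.val)
      (hB.image _)
    simpa [Finset.image_union] using h

/-- Separability of the induced metric `d a b = δ {a, b}`. -/
def Diversity.SeparableD {X : Type*} (D : Diversity X) : Prop :=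
  ∃ s : Set X, s.Countable ∧ ∀ x : X, ∀ ε : ℝ, 0 < ε → ∃ y ∈ s, D.δ {x, y} < ε

/-- Completeness of the induced metric `d a b = δ {a, b}`. -/
def Diversity.CompleteD {X : Type*} (D : Diversity X) : Prop :=
  ∀ u : ℕ → X, (∀ ε : ℝ, 0 < ε → ∃ N : ℕ, ∀ m ≥ N, ∀ n ≥ N, D.δ {u m, u n} < ε) →
    ∃ x : X, ∀ ε : ℝ, 0 < ε → ∃ N : ℕ, ∀ n ≥ N, D.δ {u n, x} < ε

/-- The diversity `δ̂` on (finite sets of) admissible functions. -/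
noncomputable def hatδ {X : Type*} (F : Finset (Finset X → ℝ)) : ℝ :=
  if F.card ≤ 1 then 0
  else sSup { r : ℝ | ∃ j ∈ F, ∃ A : (Finset X → ℝ) → Finset X,
    r = j ((F.erase j).biUnion A) - ∑ i ∈ F.erase j, i (A i) }

/-- The canonical maximal extension `f_S^X` of an admissible function on `S ⊆ X`. -/
noncomputable def extFun {X : Type*} (D : Diversity X) (S : Set X) (f : Finset S → ℝ)
    (A : Finset X) : ℝ :=
  sInf { r : ℝ | ∃ (B : Finset S) (As : S → Finset X),
    B.biUnion As = A ∧ r = f B + ∑ b ∈ B, D.δ (insert (b : X) (As b)) }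

/-- An admissible function is finitely supported if it is the canonical extension
of an admissible function on some finite nonempty `S ⊆ X`. -/
def FinitelySupported {X : Type*} (D : Diversity X) (f : Finset X → ℝ) : Prop :=
  ∃ S : Set X, S.Finite ∧ S.Nonempty ∧ ∃ g : Finset S → ℝ,
    IsAdmissible (D.restrict S) g ∧ f = extFun D S g

/-- The extension property for a diversity. -/
def Diversity.ExtensionProp {X : Type*} (D : Diversity X) : Prop :=
  ∀ F : Finset X, ∀ f : Finset ((F : Set X)) → ℝ,
    IsAdmissible (D.restrict (F : Set X)) f →
    ∃ x : X, ∀ A : Finset ((F : Set X)), D.δ (insert x (A.image Subtype.val)) = f A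

/-- The approximate extension property for a diversity. -/
def Diversity.ApproxExtensionProp {X : Type*} (D : Diversity X) : Prop :=
  ∀ F : Finset X, ∀ f : Finset ((F : Set X)) → ℝ,
    IsAdmissible (D.restrict (F : Set X)) f →
    ∀ ε : ℝ, 0 < ε →
      ∃ x : X, ∀ A : Finset ((F : Set X)), |D.δ (insert x (A.image Subtype.val)) - f A| ≤ ε

/-- Ultrahomogeneity: isomorphisms between finite subsets extend to automorphisms. -/
def Diversity.Ultrahomogeneous {X : Type*} (D : Diversity X) : Prop :=
  ∀ (A A' : Finset X) (φ : ((A : Set X)) → ((A' : Set X))), Function.Bijective φ →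
    (∀ B : Finset ((A : Set X)),
      D.δ (B.image (fun b => (φ b : X))) = D.δ (B.image Subtype.val)) →
    ∃ Φ : X → X, Function.Bijective Φ ∧ (∀ C : Finset X, D.δ (C.image Φ) = D.δ C) ∧
      ∀ a : ((A : Set X)), Φ a = (φ a : X)
private lemma div_singleton {X : Type*} (D : Diversity X) (x : X) : D.δ {x} = 0 :=
  (D.eq_zero_iff _).2 (by simp)

private lemma div_insert_mono {X : Type*} (D : Diversity X) (b : X) (A : Finset X) :
    D.δ A ≤ D.δ (insert b A) := by
  have h := D.triangle A {b} ∅ ⟨b, Finset.mem_singleton_self b⟩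
  rw [Finset.union_empty, Finset.union_empty, div_singleton, add_zero,
    Finset.union_comm, ← Finset.insert_eq] at h
  exact h

private lemma div_union_mono {X : Type*} (D : Diversity X) :
    ∀ (B A : Finset X), D.δ A ≤ D.δ (A ∪ B) := by
  intro B
  induction B using Finset.induction_on with
  | empty => simp
  | insert _ _ hb ih =>
    intro A
    rw [Finset.union_insert]
    exact (ih A).trans (div_insert_mono D _ _)

private lemma div_mono {X : Type*} (D : Diversity X) {A B : Finset X} (h : A ⊆ B) :
    D.δ A ≤ D.δ B := by
  have := div_union_mono D B A
  rwa [Finset.union_eq_right.2 h] at this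

private lemma div_key {X : Type*} (D : Diversity X) :
    ∀ (T S : Finset X) (g : X → Finset X),
      D.δ (S ∪ T.biUnion g) ≤ D.δ (S ∪ T) + ∑ y ∈ T, D.δ (insert y (g y)) := by
  intro T
  induction T using Finset.induction_on with
  | empty => simp
  | @insert y T hy ih =>
    intro S g
    rw [Finset.biUnion_insert, Finset.sum_insert hy]
    have h1 : D.δ (S ∪ (g y ∪ T.biUnion g))
        ≤ D.δ (insert y (S ∪ T.biUnion g)) + D.δ (insert y (g y)) := by
      have h := D.triangle (S ∪ T.biUnion g) {y} (g y) ⟨y, Finset.mem_singleton_self y⟩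
      calc D.δ (S ∪ (g y ∪ T.biUnion g)) = D.δ ((S ∪ T.biUnion g) ∪ g y) := by
            rw [Finset.union_comm (g y), ← Finset.union_assoc]
        _ ≤ D.δ ((S ∪ T.biUnion g) ∪ {y}) + D.δ ({y} ∪ g y) := h
        _ = D.δ (insert y (S ∪ T.biUnion g)) + D.δ (insert y (g y)) := by
            rw [← Finset.insert_eq, Finset.union_comm (S ∪ T.biUnion g), ← Finset.insert_eq]
    have h2 := ih (insert y S) g
    rw [Finset.insert_union y S (T.biUnion g), Finset.insert_union y S T] at h2
    rw [Finset.union_insert]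
    linarith

private lemma kappa_inj {X : Type*} (D : Diversity X) :
    Function.Injective (fun x : X => (fun B => D.δ (insert x B) : Finset X → ℝ)) := by
  intro x y h
  by_contra hne
  have h1 : D.δ (insert x {x}) = D.δ (insert y {x}) := congrFun h {x}
  rw [Finset.insert_eq_self.2 (Finset.mem_singleton_self x), div_singleton] at h1
  have h2 := (D.eq_zero_iff (insert y {x})).1 h1.symm
  rw [Finset.card_insert_of_notMem (by simp [Ne.symm hne]), Finset.card_singleton] at h2
  omega

/-- Each `κ_x = A ↦ δ(A ∪ {x})` is admissible and `x ↦ κ_x` embeds `(X, δ)` into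
`(E(X), δ̂)`. -/
theorem stmt3 {X : Type*} (D : Diversity X) :
    (∀ x : X, IsAdmissible D (fun A => D.δ (insert x A))) ∧
    (∀ A : Finset X,
      hatδ (A.image (fun x => (fun B => D.δ (insert x B) : Finset X → ℝ))) = D.δ A) := by
  set κ : X → (Finset X → ℝ) := fun x => (fun B => D.δ (insert x B)) with hκ
  constructor
  · intro x
    refine ⟨?_, ?_, ?_, ?_⟩
    · exact (D.eq_zero_iff _).2 (by simp)
    · intro A; exact div_mono D (Finset.subset_insert x A)
    · intro A B C hC
      have h := D.triangle (insert x A) C B hC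
      rw [Finset.insert_union, Finset.insert_union, Finset.union_comm C B] at h
      exact h
    · intro A B
      have h := D.triangle (insert x A) {x} (insert x B) ⟨x, Finset.mem_singleton_self x⟩
      have e1 : insert x A ∪ {x} = insert x A := by
        ext a
        simp only [Finset.mem_union, Finset.mem_insert, Finset.mem_singleton]
        tauto
      have e2 : {x} ∪ insert x B = insert x B := by
        ext a
        simp only [Finset.mem_union, Finset.mem_insert, Finset.mem_singleton]
        tauto
      have e3 : insert x A ∪ insert x B = insert x (A ∪ B) := by
        ext a
        simp only [Finset.mem_union, Finset.mem_insert]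
        tauto
      rw [e1, e2, e3] at h
      exact h
  · intro A
    have hinj := kappa_inj D
    by_cases hA : A.card ≤ 1
    · have hF : (A.image κ).card ≤ 1 := le_trans Finset.card_image_le hA
      simp only [hatδ, if_pos hF]
      exact ((D.eq_zero_iff A).2 hA).symm
    · obtain ⟨x, hx⟩ : A.Nonempty := Finset.card_pos.1 (by omega)
      have hFcard : (A.image κ).card = A.card := Finset.card_image_of_injective A hinj
      simp only [hatδ, hFcard, if_neg hA]
      have hub : ∀ r ∈ { r : ℝ | ∃ j ∈ A.image κ, ∃ A' : (Finset X → ℝ) → Finset X,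
          r = j (((A.image κ).erase j).biUnion A') - ∑ i ∈ (A.image κ).erase j, i (A' i) },
          r ≤ D.δ A := by
        rintro r ⟨j, hj, A', rfl⟩
        obtain ⟨z, hz, rfl⟩ := Finset.mem_image.1 hj
        rw [← Finset.image_erase hinj, Finset.image_biUnion,
          Finset.sum_image (fun a _ b _ h => hinj h)]
        have h := div_key D (A.erase z) {z} (fun a => A' (κ a))
        rw [← Finset.insert_eq, ← Finset.insert_eq, Finset.insert_erase hz] at h
        simp only [hκ] at h ⊢
        linarith
      have hmem : D.δ A ∈ { r : ℝ | ∃ j ∈ A.image κ, ∃ A' : (Finset X → ℝ) → Finset X,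
          r = j (((A.image κ).erase j).biUnion A') - ∑ i ∈ (A.image κ).erase j, i (A' i) } := by
        refine ⟨κ x, Finset.mem_image_of_mem κ hx,
          fun f => (A.erase x).filter (fun y => κ y = f), ?_⟩
        rw [← Finset.image_erase hinj, Finset.image_biUnion,
          Finset.sum_image (fun a _ b _ h => hinj h)]
        have hfil : ∀ y ∈ A.erase x,
            (A.erase x).filter (fun z => κ z = κ y) = {y} := by
          intro y hy
          ext z
          simp only [Finset.mem_filter, Finset.mem_singleton]
          constructor
          · rintro ⟨_, h⟩; exact hinj h
          · rintro rfl; exact ⟨hy, rfl⟩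
        have hB : (A.erase x).biUnion (fun y => (A.erase x).filter (fun z => κ z = κ y))
            = A.erase x := by
          rw [Finset.biUnion_congr rfl hfil]
          exact Finset.biUnion_singleton_eq_self
        rw [hB]
        have hsum : ∑ y ∈ A.erase x, κ y ((A.erase x).filter (fun z => κ z = κ y)) = 0 := by
          refine Finset.sum_eq_zero (fun y hy => ?_)
          rw [hfil y hy]
          show D.δ (insert y {y}) = 0
          rw [Finset.insert_eq_self.2 (Finset.mem_singleton_self y), div_singleton]
        rw [hsum, sub_zero]
        show D.δ A = D.δ (insert x (A.erase x))
        rw [Finset.insert_erase hx]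
      exact le_antisymm (csSup_le ⟨D.δ A, hmem⟩ hub) (le_csSup ⟨D.δ A, hub⟩ hmem)
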